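/- Let k ≥ 2 be an even integer and q a prime power with q ≡ k+1 (mod 2k). Let H_k(q) be the induced subdigraph of G_k(q) on the set S_k of nonzero k-th powers of F_q, and let H¹_k(q) be the induced subdigraph of H_k(q) on the out-neighbors of 1 in H_k(q), i.e., on the vertex set { a ∈ F_q : a ∈ S_k and a − 1 ∈ S_k }. Then for every positive integer m, k · K_{m+1}(H_k(q)) = (q − 1) · K_m(H¹_k(q)). -/

import Mathlib

/-- Number of transitive subtournaments of order `m` of the digraph `edge`. -/
noncomputable def transK {V : Type} [DecidableEq V] (edge : V → V → Prop) (m : ℕ) : ℕ :=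
  {s : Finset V | ∃ f : Fin m → V, Function.Injective f ∧ s = Finset.image f Finset.univ ∧
    ∀ i j : Fin m, i < j → edge (f i) (f j)}.ncard


section Alg
variable {F : Type} [Field F] {k : ℕ}

lemma P_ne_zero {x : F} (h : ∃ c : F, c ≠ 0 ∧ x = c ^ k) : x ≠ 0 := by
  obtain ⟨c, hc, rfl⟩ := h
  exact pow_ne_zero _ hc

lemma P_mul {x y : F} (hx : ∃ c : F, c ≠ 0 ∧ x = c ^ k) (hy : ∃ c : F, c ≠ 0 ∧ y = c ^ k) :
    ∃ c : F, c ≠ 0 ∧ x * y = c ^ k := by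
  obtain ⟨c, hc, rfl⟩ := hx
  obtain ⟨d, hd, rfl⟩ := hy
  exact ⟨c * d, mul_ne_zero hc hd, (mul_pow c d k).symm⟩

lemma P_div {x y : F} (hx : ∃ c : F, c ≠ 0 ∧ x = c ^ k) (hy : ∃ c : F, c ≠ 0 ∧ y = c ^ k) :
    ∃ c : F, c ≠ 0 ∧ x / y = c ^ k := by
  obtain ⟨c, hc, rfl⟩ := hx
  obtain ⟨d, hd, rfl⟩ := hy
  exact ⟨c / d, div_ne_zero hc hd, (div_pow c d k).symm⟩

lemma P_antisymm {x : F} (hneg : ¬ ∃ c : F, c ≠ 0 ∧ (-1 : F) = c ^ k)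
    (hx : ∃ c : F, c ≠ 0 ∧ x = c ^ k) (hnx : ∃ c : F, c ≠ 0 ∧ -x = c ^ k) : False := by
  apply hneg
  have hx0 : x ≠ 0 := P_ne_zero hx
  have := P_div hnx hx
  rwa [neg_div, div_self hx0] at this

/-- scaling map -/
def gmap (v : {x : F // ∃ c : F, c ≠ 0 ∧ x = c ^ k})
    (c : {x : F // (∃ c : F, c ≠ 0 ∧ x = c ^ k) ∧ ∃ c : F, c ≠ 0 ∧ x - 1 = c ^ k}) :
    {x : F // ∃ c : F, c ≠ 0 ∧ x = c ^ k} :=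
  ⟨(v : F) * c, P_mul v.2 c.2.1⟩

lemma gmap_ne (v : {x : F // ∃ c : F, c ≠ 0 ∧ x = c ^ k})
    (c : {x : F // (∃ c : F, c ≠ 0 ∧ x = c ^ k) ∧ ∃ c : F, c ≠ 0 ∧ x - 1 = c ^ k}) :
    gmap v c ≠ v := by
  intro h
  have hv : (v : F) ≠ 0 := P_ne_zero v.2
  have h1 : (v : F) * c = v := congrArg Subtype.val h
  have hc1 : (c : F) = 1 := by
    field_simp at h1
    tauto
  exact P_ne_zero c.2.2 (by rw [hc1]; ring)

lemma gmap_inj (v : {x : F // ∃ c : F, c ≠ 0 ∧ x = c ^ k}) :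
    Function.Injective (gmap v) := by
  intro a b hab
  have hv : (v : F) ≠ 0 := P_ne_zero v.2
  have h1 : (v : F) * a = v * b := congrArg Subtype.val hab
  exact Subtype.ext (mul_left_cancel₀ hv h1)

end Alg


lemma key {F : Type} [Field F] [DecidableEq F] {k : ℕ}
    (hneg : ¬ ∃ c : F, c ≠ 0 ∧ (-1 : F) = c ^ k) (m : ℕ) :
    transK
        (fun a b : {x : F // ∃ c : F, c ≠ 0 ∧ x = c ^ k} =>
          ∃ c : F, c ≠ 0 ∧ (b : F) - (a : F) = c ^ k) (m + 1) =
      Nat.card {x : F // ∃ c : F, c ≠ 0 ∧ x = c ^ k} *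
      transK
        (fun a b : {x : F // (∃ c : F, c ≠ 0 ∧ x = c ^ k) ∧ ∃ c : F, c ≠ 0 ∧ x - 1 = c ^ k} =>
          ∃ c : F, c ≠ 0 ∧ (b : F) - (a : F) = c ^ k) m := by
  classical
  rw [transK, transK, ← Nat.card_coe_set_eq, ← Nat.card_coe_set_eq, ← Nat.card_prod]
  set V₁ := {x : F // ∃ c : F, c ≠ 0 ∧ x = c ^ k} with hV₁
  set V₂ := {x : F // (∃ c : F, c ≠ 0 ∧ x = c ^ k) ∧ ∃ c : F, c ≠ 0 ∧ x - 1 = c ^ k} with hV₂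
  set A : Set (Finset V₁) := {s | ∃ f : Fin (m + 1) → V₁, Function.Injective f ∧
      s = Finset.image f Finset.univ ∧
      ∀ i j : Fin (m + 1), i < j → ∃ c : F, c ≠ 0 ∧ (f j : F) - (f i : F) = c ^ k} with hA
  set B : Set (Finset V₂) := {s | ∃ f : Fin m → V₂, Function.Injective f ∧
      s = Finset.image f Finset.univ ∧
      ∀ i j : Fin m, i < j → ∃ c : F, c ≠ 0 ∧ (f j : F) - (f i : F) = c ^ k} with hB
  show Nat.card A = Nat.card (V₁ × B)
  -- the map Φ
  have hΦmem : ∀ (v : V₁) (s : Finset V₂), s ∈ B →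
      insert v (s.image (gmap v)) ∈ A := by
    rintro v s ⟨f, hinj, rfl, hedge⟩
    have hv : (v : F) ≠ 0 := P_ne_zero v.2
    refine ⟨Fin.cases v (fun i => gmap v (f i)), ?_, ?_, ?_⟩
    · intro i j hij
      induction i using Fin.cases with
      | zero =>
        induction j using Fin.cases with
        | zero => rfl
        | succ j => exact absurd hij.symm (gmap_ne v (f j))
      | succ i =>
        induction j using Fin.cases with
        | zero => exact absurd hij (gmap_ne v (f i))
        | succ j =>
          simp only [Fin.cases_succ] at hij
          rw [hinj (gmap_inj v hij)]
    · ext a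
      simp only [Finset.mem_insert, Finset.mem_image, Finset.mem_univ, true_and]
      constructor
      · rintro (rfl | ⟨c, ⟨i, rfl⟩, rfl⟩)
        · exact ⟨0, by simp⟩
        · exact ⟨i.succ, by simp⟩
      · rintro ⟨i, rfl⟩
        induction i using Fin.cases with
        | zero => exact Or.inl (by simp)
        | succ i => exact Or.inr ⟨f i, ⟨i, rfl⟩, by simp⟩
    · intro i j hij
      induction j using Fin.cases with
      | zero => exact absurd hij (Fin.not_lt_zero _)
      | succ j =>
        induction i using Fin.cases with
        | zero =>
          simp only [Fin.cases_zero, Fin.cases_succ]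
          have h1 : ((gmap v (f j) : V₁) : F) - (v : F) = (v : F) * ((f j : F) - 1) := by
            show (v : F) * (f j : F) - (v : F) = _
            ring
          rw [h1]
          exact P_mul v.2 (f j).2.2
        | succ i =>
          simp only [Fin.cases_succ]
          have h1 : ((gmap v (f j) : V₁) : F) - ((gmap v (f i) : V₁) : F)
              = (v : F) * ((f j : F) - (f i : F)) := by
            show (v : F) * (f j : F) - (v : F) * (f i : F) = _
            ring
          rw [h1]
          exact P_mul v.2 (hedge i j (by exact Fin.succ_lt_succ_iff.mp hij))
  refine (Nat.card_eq_of_bijective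
    (fun p : V₁ × B => (⟨insert p.1 ((p.2 : Finset V₂).image (gmap p.1)), hΦmem p.1 p.2 p.2.2⟩ : A))
    ⟨?_, ?_⟩).symm
  · -- injectivity
    rintro ⟨v, s, hs⟩ ⟨w, t, ht⟩ hvw
    simp only [Subtype.mk.injEq, Prod.mk.injEq] at hvw ⊢
    have hnotmem : ∀ (u : V₁) (r : Finset V₂), u ∉ r.image (gmap u) := by
      intro u r hu
      obtain ⟨c, _, hc⟩ := Finset.mem_image.mp hu
      exact gmap_ne u c hc
    have hvweq : v = w := by
      by_contra hne
      have hv_mem : v ∈ insert w (t.image (gmap w)) := by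
        rw [← hvw]; exact Finset.mem_insert_self _ _
      have hw_mem : w ∈ insert v (s.image (gmap v)) := by
        rw [hvw]; exact Finset.mem_insert_self _ _
      rcases Finset.mem_insert.mp hv_mem with h | h
      · exact hne h
      · rcases Finset.mem_insert.mp hw_mem with h' | h'
        · exact hne h'.symm
        · obtain ⟨c, _, hc⟩ := Finset.mem_image.mp h
          obtain ⟨d, _, hd⟩ := Finset.mem_image.mp h'
          have h1 : (v : F) - (w : F) = (w : F) * ((c : F) - 1) := by
            rw [← hc]; show (w : F) * (c : F) - (w : F) = _; ring
          have h2 : -((v : F) - (w : F)) = (v : F) * ((d : F) - 1) := by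
            rw [← hd]; show -((v:F) - (v : F) * (d : F)) = _; ring
          exact P_antisymm hneg (h1 ▸ P_mul w.2 c.2.2) (h2 ▸ P_mul v.2 d.2.2)
    subst hvweq
    refine ⟨rfl, ?_⟩
    have himg : s.image (gmap v) = t.image (gmap v) := by
      have h1 := congrArg (Finset.erase · v) hvw
      simpa [Finset.erase_insert (hnotmem v s), Finset.erase_insert (hnotmem v t)] using h1
    exact Finset.image_injective (gmap_inj v) himg
  · -- surjectivity
    rintro ⟨s, f, hinj, rfl, hedge⟩
    set v : V₁ := f 0 with hv0
    have hv : (v : F) ≠ 0 := P_ne_zero v.2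
    have hP1 : ∀ i : Fin m, ∃ c : F, c ≠ 0 ∧ ((f i.succ : F) / (v : F)) = c ^ k :=
      fun i => P_div (f i.succ).2 v.2
    have hP2 : ∀ i : Fin m, ∃ c : F, c ≠ 0 ∧ ((f i.succ : F) / (v : F) - 1) = c ^ k := by
      intro i
      have h1 : (f i.succ : F) / (v : F) - 1 = ((f i.succ : F) - (v : F)) / (v : F) := by
        field_simp
      rw [h1]
      exact P_div (hedge 0 i.succ (Fin.succ_pos i)) v.2
    set g : Fin m → V₂ := fun i => ⟨(f i.succ : F) / (v : F), hP1 i, hP2 i⟩ with hg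
    have hginj : Function.Injective g := by
      intro i j hij
      have h1 : (f i.succ : F) / (v : F) = (f j.succ : F) / (v : F) :=
        congrArg Subtype.val hij
      have h2 : (f i.succ : F) = (f j.succ : F) := by
        field_simp at h1
        tauto
      exact Fin.succ_injective _ (hinj (Subtype.ext h2))
    have hgB : Finset.image g Finset.univ ∈ B := by
      refine ⟨g, hginj, rfl, ?_⟩
      intro i j hij
      have h1 : (g j : F) - (g i : F) = ((f j.succ : F) - (f i.succ : F)) / (v : F) := by
        show (f j.succ : F) / (v : F) - (f i.succ : F) / (v : F) = _
        ring
      rw [h1]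
      exact P_div (hedge i.succ j.succ (Fin.succ_lt_succ_iff.mpr hij)) v.2
    refine ⟨⟨v, ⟨Finset.image g Finset.univ, hgB⟩⟩, ?_⟩
    apply Subtype.ext
    show insert v ((Finset.image g Finset.univ).image (gmap v)) = Finset.image f Finset.univ
    have hgv : ∀ i : Fin m, gmap v (g i) = f i.succ := by
      intro i
      apply Subtype.ext
      show (v : F) * ((f i.succ : F) / (v : F)) = (f i.succ : F)
      field_simp
    ext a
    simp only [Finset.mem_insert, Finset.mem_image, Finset.mem_univ, true_and]
    constructor
    · rintro (rfl | ⟨c, ⟨i, rfl⟩, rfl⟩)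
      · exact ⟨0, rfl⟩
      · exact ⟨i.succ, (hgv i).symm⟩
    · rintro ⟨i, rfl⟩
      induction i using Fin.cases with
      | zero => exact Or.inl rfl
      | succ i => exact Or.inr ⟨g i, ⟨i, rfl⟩, hgv i⟩


lemma card_powers {F : Type} [Field F] [Fintype F] [DecidableEq F] (q k : ℕ)
    (hk : 2 ≤ k) (hq : Fintype.card F = q) (hdvd : k ∣ q - 1) :
    k * Nat.card {x : F // ∃ c : F, c ≠ 0 ∧ x = c ^ k} = q - 1 := by
  haveI : NeZero k := ⟨by omega⟩
  have hcardu : Fintype.card Fˣ = q - 1 := by rw [Fintype.card_units, hq]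
  have hq1 : 0 < q - 1 := by
    have : 0 < Fintype.card Fˣ := Fintype.card_pos
    omega
  set φ : Fˣ →* Fˣ := powMonoidHom k with hφ
  have hker : φ.ker = rootsOfUnity k F := by
    ext u
    simp [MonoidHom.mem_ker, mem_rootsOfUnity, hφ, powMonoidHom_apply]
  have hkercard : Nat.card φ.ker = k := by
    obtain ⟨g, hg⟩ := IsCyclic.exists_generator (α := Fˣ)
    have hog : orderOf g = q - 1 := by
      rw [orderOf_eq_card_of_forall_mem_zpowers hg, Nat.card_eq_fintype_card, hcardu]
    have hoζ : orderOf (g ^ ((q - 1) / k)) = k := by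
      rw [orderOf_pow, hog, Nat.gcd_eq_right (Nat.div_dvd_of_dvd hdvd),
        Nat.div_div_self hdvd (by omega)]
    have hprim : IsPrimitiveRoot (g ^ ((q - 1) / k)) k := by
      have := IsPrimitiveRoot.orderOf (g ^ ((q - 1) / k))
      rwa [hoζ] at this
    rw [hker, hprim.card_rootsOfUnity']
  have hrange : Nat.card φ.range = Nat.card {x : F // ∃ c : F, c ≠ 0 ∧ x = c ^ k} := by
    apply Nat.card_eq_of_bijective (fun u => ⟨((u : Fˣ) : F), by
      obtain ⟨c, hc⟩ := u.2
      exact ⟨(c : F), c.ne_zero, by rw [← hc]; simp [hφ, powMonoidHom_apply]⟩⟩)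
    constructor
    · intro a b hab
      simp only [Subtype.mk.injEq] at hab
      exact Subtype.ext (Units.ext hab)
    · rintro ⟨x, c, hc, rfl⟩
      exact ⟨⟨(Units.mk0 c hc) ^ k, ⟨Units.mk0 c hc, rfl⟩⟩, by simp⟩
  have hmain : Nat.card Fˣ = Nat.card (Fˣ ⧸ φ.ker) * Nat.card φ.ker :=
    Subgroup.card_eq_card_quotient_mul_card_subgroup _
  have hquot : Nat.card (Fˣ ⧸ φ.ker) = Nat.card φ.range :=
    Nat.card_congr (QuotientGroup.quotientKerEquivRange φ).toEquiv
  rw [Nat.card_eq_fintype_card, hcardu, hquot, hrange, hkercard] at hmain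
  rw [hmain]; exact mul_comm _ _


lemma not_P_neg_one {F : Type} [Field F] [Fintype F] (q k : ℕ)
    (hk : 2 ≤ k) (hkeven : Even k) (hq : Fintype.card F = q)
    (hmod : q % (2 * k) = k + 1) :
    ¬ ∃ c : F, c ≠ 0 ∧ (-1 : F) = c ^ k := by
  rintro ⟨c, hc, hc1⟩
  set t := q / (2 * k) with ht
  have hqe : q = 2 * k * t + (k + 1) := by
    have h := Nat.div_add_mod q (2 * k)
    rw [← ht] at h
    omega
  have hring : 2 * k * t + (k + 1) = k * (2 * t + 1) + 1 := by ring
  have hq1 : q - 1 = k * (2 * t + 1) := by omega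
  have hodd : Odd (2 * t + 1) := ⟨t, by ring⟩
  have hpow : (-1 : F) ^ (2 * t + 1) = 1 := by
    rw [hc1, ← pow_mul, ← hq1, ← hq]
    exact FiniteField.pow_card_sub_one_eq_one c hc
  rw [hodd.neg_one_pow] at hpow
  have hchar : ringChar F = 2 := neg_one_eq_one_iff.mp hpow
  have heven : Fintype.card F % 2 = 0 := FiniteField.even_card_iff_char_two.mp hchar
  obtain ⟨r, hr⟩ := hkeven
  have h2 : k * (2 * t + 1) = 2 * (k * t) + k := by ring
  omega



theorem stmt_18 {F : Type} [Field F] [Fintype F] [DecidableEq F] (q k : ℕ)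
    (hk : 2 ≤ k) (hkeven : Even k) (hq : Fintype.card F = q)
    (hmod : q % (2 * k) = k + 1) (m : ℕ) (hm : 0 < m) :
    k * transK
        (fun a b : {x : F // ∃ c : F, c ≠ 0 ∧ x = c ^ k} =>
          ∃ c : F, c ≠ 0 ∧ (b : F) - (a : F) = c ^ k) (m + 1) =
      (q - 1) * transK
        (fun a b : {x : F // (∃ c : F, c ≠ 0 ∧ x = c ^ k) ∧ ∃ c : F, c ≠ 0 ∧ x - 1 = c ^ k} =>
          ∃ c : F, c ≠ 0 ∧ (b : F) - (a : F) = c ^ k) m := by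
  have hdvd : k ∣ q - 1 := by
    have h := Nat.div_add_mod q (2 * k)
    rw [hmod] at h
    have h2 : k * (2 * (q / (2 * k)) + 1) + 1 = 2 * k * (q / (2 * k)) + (k + 1) := by ring
    exact ⟨2 * (q / (2 * k)) + 1, by omega⟩
  have hneg := not_P_neg_one q k hk hkeven hq hmod
  rw [key hneg m, ← mul_assoc, card_powers q k hk hq hdvd]
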